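/- Let a, c ∈ (0,1) with 1 - a ≠ c, and let b ∈ (0,1). For integers i < m, Σ_{j=i+1}^{m} (1-a)^{j-i-1} · a · (1 - b(1 - c^{m-j})) = (1-b)(1 - (1-a)^{m-i}) + a·b·((1-a)^{m-i} - c^{m-i})/(1 - a - c). -/
import Mathlib


/-- Closed form of the false negative probability `FN_{i,m}` of a QHT:
`a` is the per-step eviction probability, `b = k/S`, `c = 1 - 1/(Nk)`. -/
theorem qht_fn_closed_form (a b c : ℝ) (ha : a ∈ Set.Ioo (0 : ℝ) 1)
    (hb : b ∈ Set.Ioo (0 : ℝ) 1) (hc : c ∈ Set.Ioo (0 : ℝ) 1)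
    (hac : 1 - a ≠ c) (i m : ℕ) (him : i < m) :
    ∑ j ∈ Finset.Icc (i + 1) m,
        (1 - a) ^ (j - i - 1) * a * (1 - b * (1 - c ^ (m - j))) =
      (1 - b) * (1 - (1 - a) ^ (m - i)) +
        a * b * ((1 - a) ^ (m - i) - c ^ (m - i)) / (1 - a - c) := by
  obtain ⟨ha0, ha1⟩ := ha
  have ha0' : a ≠ 0 := ne_of_gt ha0
  have hx1 : (1 - a : ℝ) ≠ 1 := by intro h; apply ha0'; linarith [sub_eq_of_eq_add' h.symm]
  have hxc : (1 - a : ℝ) - c ≠ 0 := sub_ne_zero.mpr hac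
  set n := m - i with hn
  have hn1 : 1 ≤ n := by omega
  rw [← Finset.Ico_add_one_right_eq_Icc, Finset.sum_Ico_eq_sum_range]
  have hrange : m + 1 - (i + 1) = n := by omega
  rw [hrange]
  have hcong : ∀ t ∈ Finset.range n,
      (1 - a) ^ (i + 1 + t - i - 1) * a * (1 - b * (1 - c ^ (m - (i + 1 + t)))) =
      a * (1 - b) * (1 - a) ^ t + a * b * ((1 - a) ^ t * c ^ (n - 1 - t)) := by
    intro t ht
    have ht' : t < n := Finset.mem_range.mp ht
    have e1 : i + 1 + t - i - 1 = t := by omega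
    have e2 : m - (i + 1 + t) = n - 1 - t := by omega
    rw [e1, e2]; ring
  rw [Finset.sum_congr rfl hcong, Finset.sum_add_distrib, ← Finset.mul_sum, ← Finset.mul_sum]
  have hg1 : ∑ t ∈ Finset.range n, (1 - a) ^ t = ((1 - a) ^ n - 1) / ((1 - a) - 1) :=
    geom_sum_eq hx1 n
  have hg2 : ∑ t ∈ Finset.range n, (1 - a) ^ t * c ^ (n - 1 - t) =
      ((1 - a) ^ n - c ^ n) / ((1 - a) - c) := by
    rw [eq_div_iff hxc]
    exact geom_sum₂_mul (1 - a) c n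
  rw [hg1, hg2]
  have hx1' : (1 - a : ℝ) - 1 ≠ 0 := sub_ne_zero.mpr hx1
  field_simp [ha0', hxc]
  ring
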